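/- Let C be a preadditive category, Y an object, and let N ≥ 1. Suppose we are given objects X, P₁,…,P_N, Q₁,…,Q_N and morphisms x : X → Y, aᵢ : Pᵢ → Y, bᵢ : Qᵢ → Y, xᵢ : Pᵢ → Y, together with morphisms φᵢ : X → Pᵢ, θᵢ : X → Qᵢ, and for each i and each j < i morphisms φᵢⱼ : Pᵢ → Pⱼ and θᵢⱼ : Pᵢ → Qⱼ, such that x = Σᵢ aᵢ∘φᵢ + bᵢ∘θᵢ and, for each i, xᵢ = aᵢ + Σ_{j<i} (aⱼ∘φᵢⱼ + bⱼ∘θᵢⱼ). Then there exist morphisms φ̄ᵢ : X → Pᵢ and θ̄ᵢ : X → Qᵢ such that x = Σᵢ xᵢ∘φ̄ᵢ + bᵢ∘θ̄ᵢ. -/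

import Mathlib

open CategoryTheory

/-- Lemma 6.32: linear substitution in a preadditive category.
Given `x = ∑ aᵢ ∘ φᵢ + bᵢ ∘ θᵢ` and `xᵢ = aᵢ + ∑_{j<i} (aⱼ ∘ φᵢⱼ + bⱼ ∘ θᵢⱼ)`,
there are morphisms `φ̄ᵢ, θ̄ᵢ` with `x = ∑ xᵢ ∘ φ̄ᵢ + bᵢ ∘ θ̄ᵢ`. -/
theorem stmt1 {C : Type*} [Category C] [Preadditive C]
    (X Y : C) (N : ℕ) (hN : 1 ≤ N)
    (P Q : ℕ → C)
    (x : X ⟶ Y) (a : ∀ i, P i ⟶ Y) (b : ∀ i, Q i ⟶ Y) (xi : ∀ i, P i ⟶ Y)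
    (φ : ∀ i, X ⟶ P i) (θ : ∀ i, X ⟶ Q i)
    (φ' : ∀ i j, P i ⟶ P j) (θ' : ∀ i j, P i ⟶ Q j)
    (hx : x = ∑ i ∈ Finset.range N, (φ i ≫ a i + θ i ≫ b i))
    (hxi : ∀ i < N,
      xi i = a i + ∑ j ∈ Finset.range i, (φ' i j ≫ a j + θ' i j ≫ b j)) :
    ∃ (φb : ∀ i, X ⟶ P i) (θb : ∀ i, X ⟶ Q i),
      x = ∑ i ∈ Finset.range N, (φb i ≫ xi i + θb i ≫ b i) := by
  set InS : (X ⟶ Y) → Prop := fun h =>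
    ∃ (φb : ∀ i, X ⟶ P i) (θb : ∀ i, X ⟶ Q i),
      h = ∑ i ∈ Finset.range N, (φb i ≫ xi i + θb i ≫ b i) with hInS
  suffices h : InS x by
    obtain ⟨φb, θb, h⟩ := h; exact ⟨φb, θb, h⟩
  have hzero : InS 0 := by
    refine ⟨fun _ => 0, fun _ => 0, ?_⟩; simp
  have hadd : ∀ h1 h2, InS h1 → InS h2 → InS (h1 + h2) := by
    rintro h1 h2 ⟨f1, g1, rfl⟩ ⟨f2, g2, rfl⟩
    refine ⟨fun i => f1 i + f2 i, fun i => g1 i + g2 i, ?_⟩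
    rw [← Finset.sum_add_distrib]
    refine Finset.sum_congr rfl fun i _ => ?_
    simp [Preadditive.add_comp]; abel
  have hneg : ∀ h1, InS h1 → InS (-h1) := by
    rintro h1 ⟨f1, g1, rfl⟩
    refine ⟨fun i => -f1 i, fun i => -g1 i, ?_⟩
    rw [← Finset.sum_neg_distrib]
    refine Finset.sum_congr rfl fun i _ => ?_
    simp; abel
  have hsum : ∀ (s : Finset ℕ) (f : ℕ → (X ⟶ Y)), (∀ j ∈ s, InS (f j)) →
      InS (∑ j ∈ s, f j) := by
    intro s f hf
    induction s using Finset.induction_on with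
    | empty => simpa using hzero
    | insert k s' hnotmem ih =>
        rw [Finset.sum_insert hnotmem]
        exact hadd _ _ (hf k (Finset.mem_insert_self k s'))
          (ih fun j hj => hf j (Finset.mem_insert_of_mem hj))
  have hsingleP : ∀ i, i < N → ∀ c : X ⟶ P i, InS (c ≫ xi i) := by
    intro i hi c
    refine ⟨fun j => if h : i = j then c ≫ eqToHom (congrArg P h) else 0,
      fun _ => 0, ?_⟩
    rw [Finset.sum_eq_single i]
    · simp
    · intro j _ hj
      simp [Ne.symm hj]
    · intro h
      exact absurd (Finset.mem_range.mpr hi) h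
  have hsingleQ : ∀ i, i < N → ∀ c : X ⟶ Q i, InS (c ≫ b i) := by
    intro i hi c
    refine ⟨fun _ => 0,
      fun j => if h : i = j then c ≫ eqToHom (congrArg Q h) else 0, ?_⟩
    rw [Finset.sum_eq_single i]
    · simp
    · intro j _ hj
      simp [Ne.symm hj]
    · intro h
      exact absurd (Finset.mem_range.mpr hi) h
  have key : ∀ i, i < N → ∀ c : X ⟶ P i, InS (c ≫ a i) := by
    intro i
    induction i using Nat.strong_induction_on with
    | _ i ih =>
      intro hi c
      have h1 : c ≫ a i = c ≫ xi i +
          (- ∑ j ∈ Finset.range i, ((c ≫ φ' i j) ≫ a j + (c ≫ θ' i j) ≫ b j)) := by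
        rw [hxi i hi]
        simp [Preadditive.comp_add, Preadditive.comp_sum]
      rw [h1]
      refine hadd _ _ (hsingleP i hi c) (hneg _ (hsum _ _ fun j hj => ?_))
      have hji : j < i := Finset.mem_range.mp hj
      exact hadd _ _ (ih j hji (hji.trans hi) (c ≫ φ' i j))
        (hsingleQ j (hji.trans hi) (c ≫ θ' i j))
  rw [hx]
  refine hsum _ _ fun i hi => ?_
  have hi' := Finset.mem_range.mp hi
  exact hadd _ _ (key i hi' (φ i)) (hsingleQ i hi' (θ i))
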